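/- Let E be a real Banach lattice and let T : E → E be a positive bounded linear operator which is mean ergodic with mean ergodic projection 0, i.e. the Cesàro means (1/n) · Σ_{k=0}^{n-1} T^k x converge in norm to 0 for every x ∈ E. Then for every integer m ≥ 1 the power T^m is also mean ergodic with mean ergodic projection 0, i.e. (1/n) · Σ_{k=0}^{n-1} (T^m)^k x converges in norm to 0 for every x ∈ E. -/

import Mathlib

open Filter

/-- Let `E` be a real Banach lattice and `T : E → E` a positive bounded
linear operator which is mean ergodic with mean ergodic projection `0`, i.e. the Cesàro
means `(1/n) • ∑_{k<n} T^k x` converge in norm to `0` for every `x`. Then for every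
`m ≥ 1` the power `T^m` is also mean ergodic with mean ergodic projection `0`. -/
theorem powers_mean_ergodic_of_mean_ergodic_projection_zero
    (E : Type*) [NormedAddCommGroup E] [Lattice E] [IsOrderedAddMonoid E] [HasSolidNorm E] [NormedSpace ℝ E] [CompleteSpace E]
    [PosSMulStrictMono ℝ E] [PosSMulReflectLT ℝ E]
    (T : E →L[ℝ] E)
    (hpos : ∀ x : E, 0 ≤ x → 0 ≤ T x)
    (hme : ∀ x : E,
      Tendsto (fun n : ℕ => (n : ℝ)⁻¹ • ∑ k ∈ Finset.range n, (T ^ k) x) atTop (nhds 0))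
    (m : ℕ) (hm : 1 ≤ m) :
    ∀ x : E,
      Tendsto (fun n : ℕ => (n : ℝ)⁻¹ • ∑ k ∈ Finset.range n, ((T ^ m) ^ k) x) atTop
        (nhds 0) := by
  have hmpos : (0:ℕ) < m := hm
  have hpow : ∀ (k : ℕ) (x : E), 0 ≤ x → 0 ≤ (T ^ k) x := by
    intro k
    induction k with
    | zero => intro x hx; simpa using hx
    | succ k ih =>
      intro x hx
      have : (T ^ (k+1)) x = (T ^ k) (T x) := by
        rw [pow_succ]; rfl
      rw [this]
      exact ih _ (hpos x hx)
  -- case x ≥ 0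
  have h0 : ∀ x : E, 0 ≤ x →
      Tendsto (fun n : ℕ => (n : ℝ)⁻¹ • ∑ k ∈ Finset.range n, ((T ^ m) ^ k) x) atTop
        (nhds 0) := by
    intro x hx
    set F : ℕ → E := fun n => (n : ℝ)⁻¹ • ∑ j ∈ Finset.range n, (T ^ j) x with hF
    have hFsub : Tendsto (fun n => F (m * n)) atTop (nhds 0) :=
      (hme x).comp (tendsto_atTop_mono (fun n => Nat.le_mul_of_pos_left n hmpos) tendsto_id)
    have hg : Tendsto (fun n => (m : ℝ) • F (m * n)) atTop (nhds 0) := by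
      simpa using hFsub.const_smul (m : ℝ)
    refine squeeze_zero_norm (a := fun n => ‖(m : ℝ) • F (m * n)‖) (fun n => ?_)
      (by simpa using hg.norm)
    -- show ‖S n‖ ≤ ‖(m:ℝ) • F (m*n)‖
    set Sn : E := (n : ℝ)⁻¹ • ∑ k ∈ Finset.range n, ((T ^ m) ^ k) x
    have hsum_eq : ∑ k ∈ Finset.range n, ((T ^ m) ^ k) x
        = ∑ j ∈ (Finset.range n).image (fun k => m * k), (T ^ j) x := by
      rw [Finset.sum_image]
      · simp [← pow_mul]
      · intro a _ b _ h
        exact Nat.eq_of_mul_eq_mul_left hmpos h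
    have hsubset : (Finset.range n).image (fun k => m * k) ⊆ Finset.range (m * n) := by
      intro j hj
      simp only [Finset.mem_image, Finset.mem_range] at hj ⊢
      obtain ⟨k, hk, rfl⟩ := hj
      exact (Nat.mul_lt_mul_left hmpos).mpr hk
    have hle : ∑ k ∈ Finset.range n, ((T ^ m) ^ k) x
        ≤ ∑ j ∈ Finset.range (m * n), (T ^ j) x := by
      rw [hsum_eq]
      exact Finset.sum_le_sum_of_subset_of_nonneg hsubset
        (fun j _ _ => hpow j x hx)
    have hS0 : (0:E) ≤ Sn := by
      apply smul_nonneg (by positivity)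
      exact Finset.sum_nonneg fun k _ => by
        have := hpow (m * k) x hx
        rwa [pow_mul] at this
    have hB0 : (0:E) ≤ (m : ℝ) • F (m * n) := by
      apply smul_nonneg (by positivity)
      apply smul_nonneg (by positivity)
      exact Finset.sum_nonneg fun j _ => hpow j x hx
    have hSB : Sn ≤ (m : ℝ) • F (m * n) := by
      have h1 : Sn ≤ (n : ℝ)⁻¹ • ∑ j ∈ Finset.range (m * n), (T ^ j) x :=
        smul_le_smul_of_nonneg_left hle (by positivity)
      have h2 : (m : ℝ) • F (m * n)
          = (n : ℝ)⁻¹ • ∑ j ∈ Finset.range (m * n), (T ^ j) x := by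
        rw [hF, smul_smul]
        congr 1
        rcases Nat.eq_zero_or_pos n with rfl | hn
        · simp
        · rw [Nat.cast_mul, mul_inv]
          field_simp
      rw [h2]; exact h1
    apply norm_le_norm_of_abs_le_abs
    rw [abs_of_nonneg hS0, abs_of_nonneg hB0]
    exact hSB
  intro x
  have hdecomp : ∀ n : ℕ, (n : ℝ)⁻¹ • ∑ k ∈ Finset.range n, ((T ^ m) ^ k) x
      = ((n : ℝ)⁻¹ • ∑ k ∈ Finset.range n, ((T ^ m) ^ k) x⁺)
        - ((n : ℝ)⁻¹ • ∑ k ∈ Finset.range n, ((T ^ m) ^ k) x⁻) := by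
    intro n
    rw [← smul_sub, ← Finset.sum_sub_distrib]
    congr 1
    apply Finset.sum_congr rfl
    intro k _
    rw [← map_sub]
    congr 1
    exact (posPart_sub_negPart x).symm ▸ rfl
  have := (h0 x⁺ (posPart_nonneg x)).sub (h0 x⁻ (negPart_nonneg x))
  simpa only [← hdecomp, sub_zero] using this
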